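/- Every diagram X : C → U over an admissible inverse category C admits a Reedy fibrant replacement: there exists a Reedy fibrant diagram Y : C → U and a natural transformation η : X → Y which is a levelwise equivalence of fibrant types. -/

import Mathlib

universe u

/-- A two-level type theory, presented over the strict layer of Lean types (where
strict equality is `Eq`, which satisfies UIP and function extensionality): a class of
fibrant types closed under unit, Σ and Π, together with a fibrant (intensional)
equality type on fibrant types, with path induction `J` into fibrant families and its
computation rule. -/
structure TLTT where
  /-- Fibrancy predicate: the fibrant types among the strict types. -/
  Fib : Type u → Prop
  fib_unit : Fib PUnit
  fib_sigma : ∀ {A : Type u} {B : A → Type u},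
      Fib A → (∀ a, Fib (B a)) → Fib (Σ a, B a)
  fib_pi : ∀ {A : Type u} {B : A → Type u},
      Fib A → (∀ a, Fib (B a)) → Fib (∀ a, B a)
  /-- The fibrant (intensional) equality type. -/
  Id : ∀ {A : Type u}, A → A → Type u
  idrefl : ∀ {A : Type u} (a : A), Id a a
  fib_id : ∀ {A : Type u}, Fib A → ∀ a b : A, Fib (Id a b)
  /-- Path induction, eliminating into fibrant families. -/
  J : ∀ {A : Type u} (a : A) (P : ∀ b : A, Id a b → Type u),
      (∀ b p, Fib (P b p)) → P a (idrefl a) → ∀ (b : A) (p : Id a b), P b p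
  J_refl : ∀ {A : Type u} (a : A) (P : ∀ b : A, Id a b → Type u)
      (hP : ∀ b p, Fib (P b p)) (d : P a (idrefl a)), J a P hP d a (idrefl a) = d

/-- A map is an equivalence (of fibrant types) if it has a right inverse and a left
inverse up to fibrant equality. -/
def IsEquivT (T : TLTT.{u}) {A B : Type u} (f : A → B) : Type u :=
  ((g : B → A) ×' ∀ b, T.Id (f (g b)) b) × ((h : B → A) ×' ∀ a, T.Id (h (f a)) a)

/-- A map `p : E → B` is a fibration if its strict fibres are strictly isomorphic to the
values of a fibrant type family over `B`. -/
def IsFibrationT (T : TLTT.{u}) {E B : Type u} (p : E → B) : Prop :=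
  ∃ F : B → Type u, (∀ b, T.Fib (F b)) ∧ ∀ b, Nonempty (F b ≃ { e : E // p e = b })

/-- A strict category: objects, hom-types, identities and composition, with the
categorical laws holding up to strict equality. -/
structure SCat where
  Obj : Type u
  Hom : Obj → Obj → Type u
  id : ∀ x, Hom x x
  comp : ∀ {x y z : Obj}, Hom y z → Hom x y → Hom x z
  id_comp : ∀ {x y : Obj} (f : Hom x y), comp (id y) f = f
  comp_id : ∀ {x y : Obj} (f : Hom x y), comp f (id x) = f
  assoc : ∀ {x y z w : Obj} (h : Hom z w) (g : Hom y z) (f : Hom x y),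
      comp h (comp g f) = comp (comp h g) f

/-- A strict functor from a strict category to the universe of strict types,
strictly preserving identities and composition. -/
structure SFunctor (C : SCat.{u}) where
  obj : C.Obj → Type u
  map : ∀ {x y : C.Obj}, C.Hom x y → obj x → obj y
  map_id : ∀ (x : C.Obj) (a : obj x), map (C.id x) a = a
  map_comp : ∀ {x y z : C.Obj} (g : C.Hom y z) (f : C.Hom x y) (a : obj x),
      map (C.comp g f) a = map g (map f a)

/-- The strict limit of a diagram of strict types: the type of natural transformations
from the constant functor at the unit type, i.e. compatible families of elements. -/
def SLimit {C : SCat.{u}} (X : SFunctor C) : Type u :=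
  { c : ∀ y : C.Obj, X.obj y // ∀ (x y : C.Obj) (f : C.Hom x y), X.map f (c x) = c y }

/-- An object of the reduced coslice `z ⫽ C`: an object with a non-identity map from `z`. -/
structure RCObj (C : SCat.{u}) (z : C.Obj) where
  y : C.Obj
  f : C.Hom z y
  nonid : ∀ _ : z = y, ¬ HEq f (C.id z)

/-- The matching object of a diagram `X` at `z`: the strict limit of `X` restricted
along the forgetful functor from the reduced coslice `z ⫽ C`. -/
def Matching {C : SCat.{u}} (X : SFunctor C) (z : C.Obj) : Type u :=
  { c : ∀ o : RCObj C z, X.obj o.y //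
    ∀ (o o' : RCObj C z) (h : C.Hom o.y o'.y), C.comp h o.f = o'.f →
      X.map h (c o) = c o' }

/-- The canonical map from `X z` to the matching object at `z`. -/
def matchMap {C : SCat.{u}} (X : SFunctor C) (z : C.Obj) :
    X.obj z → Matching X z :=
  fun a => ⟨fun o => X.map o.f a, by
    intro o o' h hh
    rw [← X.map_comp, hh]⟩

/-- A diagram over an inverse category is Reedy fibrant if each canonical map to the
matching object is a fibration. -/
def ReedyFibrant (T : TLTT.{u}) {C : SCat.{u}} (X : SFunctor C) : Prop :=
  ∀ z : C.Obj, IsFibrationT T (matchMap X z)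

/-- An inverse structure on a strict category: a rank functor to `(ℕˢ)ᵒᵖ` which
creates identities. -/
structure IsInverse (C : SCat.{u}) where
  rank : C.Obj → ℕ
  rank_le : ∀ {x y : C.Obj}, C.Hom x y → rank y ≤ rank x
  createsId : ∀ {x y : C.Obj} (f : C.Hom x y), rank x = rank y →
      ∃ _ : x = y, HEq f (C.id x)

/-- The reduced coslice `z ⫽ C` as a strict category. -/
def RC (C : SCat.{u}) (z : C.Obj) : SCat.{u} where
  Obj := RCObj C z
  Hom o o' := { h : C.Hom o.y o'.y // C.comp h o.f = o'.f }
  id o := ⟨C.id o.y, C.id_comp o.f⟩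
  comp g f := ⟨C.comp g.1 f.1, by rw [← C.assoc, f.2, g.2]⟩
  id_comp f := Subtype.ext (C.id_comp f.1)
  comp_id f := Subtype.ext (C.comp_id f.1)
  assoc h g f := Subtype.ext (C.assoc h.1 g.1 f.1)

/-- A strict natural transformation between diagrams. -/
structure SNat {C : SCat.{u}} (X Y : SFunctor C) where
  app : ∀ z : C.Obj, X.obj z → Y.obj z
  naturality : ∀ {x y : C.Obj} (f : C.Hom x y) (a : X.obj x),
      Y.map f (app x a) = app y (X.map f a)

/-- An inverse category is admissible if for every object `z`, Reedy fibrant diagrams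
over the reduced coslice `z ⫽ C` have fibrant limits. -/
def Admissible (T : TLTT.{u}) (C : SCat.{u}) : Prop :=
  ∀ (z : C.Obj) (Y : SFunctor (RC C z)),
    (∀ o, T.Fib (Y.obj o)) → ReedyFibrant T Y →
    ∃ B : Type u, T.Fib B ∧ Nonempty (SLimit Y ≃ B)

namespace RFRaux

variable {T : TLTT.{u}} {C : SCat.{u}}

theorem heq_eq_iff {α β : Sort v} {a b : α} {a' b' : β}
    (ha : HEq a a') (hb : HEq b b') : (a = b) ↔ (a' = b') := by
  obtain rfl := type_eq_of_heq ha
  rw [eq_of_heq ha, eq_of_heq hb]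

theorem rank_lt (inv : IsInverse C) {x y : C.Obj} (f : C.Hom x y)
    (hn : ∀ h : x = y, ¬ HEq f (C.id x)) : inv.rank y < inv.rank x := by
  rcases lt_or_eq_of_le (inv.rank_le f) with h | h
  · exact h
  · obtain ⟨e, he⟩ := inv.createsId f h.symm
    exact absurd he (hn e)

theorem nonid_of_lt (inv : IsInverse C) {x y : C.Obj} (h : inv.rank y < inv.rank x)
    (f : C.Hom x y) : ∀ e : x = y, ¬ HEq f (C.id x) := by
  intro e
  subst e
  exact absurd h (lt_irrefl _)

theorem obj_eq_of_not_lt (inv : IsInverse C) {x y : C.Obj} (f : C.Hom x y)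
    (h : ¬ inv.rank y < inv.rank x) : x = y :=
  (inv.createsId f (le_antisymm (le_of_not_gt h) (inv.rank_le f))).choose

theorem rank_lt_rc (inv : IsInverse C) {z : C.Obj} (o : RCObj C z) :
    inv.rank o.y < inv.rank z :=
  rank_lt inv o.f o.nonid

/-- The partial-replacement data: a type family, a unit map from `X`, and a
"cone projection" from which all diagram maps are derived. -/
structure Pack (C : SCat.{u}) (X : SFunctor C) where
  A : C.Obj → Type u
  eta : ∀ z, X.obj z → A z
  proj : ∀ z, A z → ∀ o : RCObj C z, A o.y

variable {X : SFunctor C}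

/-- The diagram map derived from a pack. -/
def Pack.map (inv : IsInverse C) (P : Pack C X) {x y : C.Obj} (f : C.Hom x y)
    (a : P.A x) : P.A y :=
  if h : inv.rank y < inv.rank x then P.proj x a ⟨y, f, nonid_of_lt inv h f⟩
  else cast (congrArg P.A (obj_eq_of_not_lt inv f h)) a

theorem Pack.map_id (inv : IsInverse C) (P : Pack C X) (z : C.Obj) (a : P.A z) :
    P.map inv (C.id z) a = a := by
  rw [Pack.map, dif_neg (lt_irrefl _), cast_eq]

theorem Pack.map_lt (inv : IsInverse C) (P : Pack C X) {x y : C.Obj} (f : C.Hom x y)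
    (h : inv.rank y < inv.rank x) (a : P.A x) :
    P.map inv f a = P.proj x a ⟨y, f, nonid_of_lt inv h f⟩ := dif_pos h

/-- Matching object for a pack. -/
def MatchP (inv : IsInverse C) (P : Pack C X) (z : C.Obj) : Type u :=
  { c : ∀ o : RCObj C z, P.A o.y //
    ∀ (o o' : RCObj C z) (h : C.Hom o.y o'.y), C.comp h o.f = o'.f →
      P.map inv h (c o) = c o' }

/-- Goodness of a pack below level `n`. -/
structure Good (T : TLTT.{u}) (inv : IsInverse C) (X : SFunctor C) (n : ℕ)
    (P : Pack C X) : Prop where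
  fib : ∀ z, inv.rank z < n → T.Fib (P.A z)
  comp : ∀ {x y z : C.Obj} (g : C.Hom y z) (f : C.Hom x y), inv.rank x < n →
    ∀ a, P.map inv (C.comp g f) a = P.map inv g (P.map inv f a)
  nat : ∀ {x y : C.Obj} (f : C.Hom x y), inv.rank x < n →
    ∀ a, P.map inv f (P.eta x a) = P.eta y (X.map f a)
  reedy : ∀ z, inv.rank z < n → ∃ F : MatchP inv P z → Type u,
    (∀ c, T.Fib (F c)) ∧
    ∀ c, Nonempty (F c ≃ { a : P.A z // ∀ o, P.map inv o.f a = c.1 o })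

end RFRaux

namespace RFRaux

variable {T : TLTT.{u}} {C : SCat.{u}} {X : SFunctor C}

/-- The restriction of a pack to a reduced coslice, as a strict functor. -/
def resDiag (inv : IsInverse C) {n : ℕ} {P : Pack C X} (G : Good T inv X n P)
    (z : C.Obj) (hz : inv.rank z ≤ n) : SFunctor (RC C z) where
  obj o := P.A o.y
  map h a := P.map inv h.1 a
  map_id o a := Pack.map_id inv P o.y a
  map_comp g f a :=
    G.comp g.1 f.1 (lt_of_lt_of_le (rank_lt_rc inv _) hz) a

theorem rank_lt_in_RC (inv : IsInverse C) {z : C.Obj} {o : RCObj C z}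
    (q : RCObj (RC C z) o) : inv.rank q.y.y < inv.rank o.y := by
  by_contra h
  obtain ⟨⟨wy, wf, wn⟩, ⟨k1, hk⟩, qn⟩ := q
  dsimp at h hk ⊢
  have e : o.y = wy := obj_eq_of_not_lt inv k1 h
  subst e
  have hid : k1 = C.id o.y :=
    eq_of_heq (inv.createsId k1 rfl).choose_spec
  subst hid
  rw [C.id_comp] at hk
  subst hk
  exact qn rfl (heq_of_eq (Subtype.ext rfl))

/-- Forward comparison between reduced coslices of coslices. -/
def iotaFwd (inv : IsInverse C) {z : C.Obj} (o : RCObj C z)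
    (q : RCObj (RC C z) o) : RCObj C o.y :=
  ⟨q.y.y, q.f.1, nonid_of_lt inv (rank_lt_in_RC inv q) _⟩

/-- Backward comparison between reduced coslices of coslices. -/
def iotaInv (inv : IsInverse C) {z : C.Obj} (o : RCObj C z)
    (w : RCObj C o.y) : RCObj (RC C z) o :=
  ⟨⟨w.y, C.comp w.f o.f,
    nonid_of_lt inv (lt_trans (rank_lt_rc inv w) (rank_lt_rc inv o)) _⟩,
   ⟨w.f, rfl⟩, by
    intro e _
    have h2 := rank_lt_rc inv w
    have e2 : inv.rank o.y = inv.rank w.y := congrArg (fun t => inv.rank t.y) e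
    omega⟩

theorem RCObj.ext' {z : C.Obj} {p q : RCObj C z} (h1 : p.y = q.y)
    (h2 : HEq p.f q.f) : p = q := by
  obtain ⟨py, pf, pn⟩ := p
  obtain ⟨qy, qf, qn⟩ := q
  dsimp at h1 h2
  subst h1
  obtain rfl := eq_of_heq h2
  rfl

theorem rcrc_ext {z : C.Obj} {o : RCObj C z} {p q : RCObj (RC C z) o}
    (h1 : p.y = q.y) (h2 : HEq p.f.1 q.f.1) : p = q := by
  obtain ⟨py, pf, pn⟩ := p
  obtain ⟨qy, qf, qn⟩ := q
  dsimp at h1 h2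
  subst h1
  obtain rfl : pf = qf := Subtype.ext (eq_of_heq h2)
  rfl

theorem iota_inv_fwd (inv : IsInverse C) {z : C.Obj} (o : RCObj C z)
    (q : RCObj (RC C z) o) : iotaInv inv o (iotaFwd inv o q) = q :=
  rcrc_ext (RCObj.ext' rfl (heq_of_eq q.f.2)) HEq.rfl

/-- Translating matching families along the coslice-of-coslice comparison. -/
def cOf (inv : IsInverse C) {n : ℕ} {P : Pack C X} (G : Good T inv X n P)
    (z : C.Obj) (hz : inv.rank z ≤ n) (o : RCObj C z)
    (d : Matching (resDiag inv G z hz) o) : MatchP inv P o.y :=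
  ⟨fun w => d.1 (iotaInv inv o w), by
    intro w w' k hk
    have pf1 : C.comp k (C.comp w.f o.f) = C.comp w'.f o.f := by
      rw [C.assoc, hk]
    exact d.2 (iotaInv inv o w) (iotaInv inv o w') ⟨k, pf1⟩ (Subtype.ext hk)⟩

theorem resDiag_reedy (inv : IsInverse C) {n : ℕ} {P : Pack C X}
    (G : Good T inv X n P) (z : C.Obj) (hz : inv.rank z ≤ n) :
    ReedyFibrant T (resDiag inv G z hz) := by
  intro o
  obtain ⟨F, hF, hE⟩ := G.reedy o.y (lt_of_lt_of_le (rank_lt_rc inv o) hz)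
  refine ⟨fun d => F (cOf inv G z hz o d), fun d => hF _, fun d => ?_⟩
  obtain ⟨e⟩ := hE (cOf inv G z hz o d)
  refine ⟨e.trans (Equiv.subtypeEquiv (Equiv.refl _) fun a => ?_)⟩
  constructor
  · intro h
    apply Subtype.ext
    funext q
    have h1 := h (iotaFwd inv o q)
    have h2 : HEq (d.1 (iotaInv inv o (iotaFwd inv o q))) (d.1 q) := by
      rw [iota_inv_fwd inv o q]
    exact eq_of_heq ((heq_of_eq h1).trans h2)
  · intro h w
    exact congrFun (congrArg Subtype.val h) (iotaInv inv o w)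

end RFRaux

namespace RFRaux

variable {T : TLTT.{u}} {C : SCat.{u}} {X : SFunctor C}

/-- The cone under `X z` induced by the unit maps of a pack. -/
def famC (inv : IsInverse C) {n : ℕ} {P : Pack C X} (G : Good T inv X n P)
    (z : C.Obj) (hz : inv.rank z = n) (a : X.obj z) :
    SLimit (resDiag inv G z hz.le) :=
  ⟨fun o => P.eta o.y (X.map o.f a), by
    intro o o' k
    show P.map inv k.1 (P.eta o.y (X.map o.f a)) = _
    rw [G.nat k.1 (hz ▸ rank_lt_rc inv o), ← X.map_comp, k.2]⟩

theorem admB (inv : IsInverse C) (adm : Admissible T C) {n : ℕ} {P : Pack C X}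
    (G : Good T inv X n P) (z : C.Obj) (hz : inv.rank z = n) :
    ∃ B : Type u, T.Fib B ∧ Nonempty (SLimit (resDiag inv G z hz.le) ≃ B) :=
  adm z (resDiag inv G z hz.le) (fun o => G.fib o.y (hz ▸ rank_lt_rc inv o))
    (resDiag_reedy inv G z hz.le)

noncomputable def Bz (inv : IsInverse C) (adm : Admissible T C) {n : ℕ}
    {P : Pack C X} (G : Good T inv X n P) (z : C.Obj) (hz : inv.rank z = n) :
    Type u :=
  (admB inv adm G z hz).choose

theorem fib_Bz (inv : IsInverse C) (adm : Admissible T C) {n : ℕ}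
    {P : Pack C X} (G : Good T inv X n P) (z : C.Obj) (hz : inv.rank z = n) :
    T.Fib (Bz inv adm G z hz) :=
  (admB inv adm G z hz).choose_spec.1

noncomputable def eB (inv : IsInverse C) (adm : Admissible T C) {n : ℕ}
    {P : Pack C X} (G : Good T inv X n P) (z : C.Obj) (hz : inv.rank z = n) :
    SLimit (resDiag inv G z hz.le) ≃ Bz inv adm G z hz :=
  (admB inv adm G z hz).choose_spec.2.some

/-- The new level: mapping cocylinder of `X z → B z`. -/
noncomputable def NEWt (inv : IsInverse C) (adm : Admissible T C) {n : ℕ}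
    {P : Pack C X} (G : Good T inv X n P) (z : C.Obj) (hz : inv.rank z = n) :
    Type u :=
  Σ _a : X.obj z, Σ b : Bz inv adm G z hz,
    T.Id (eB inv adm G z hz (famC inv G z hz _a)) b

theorem fib_NEWt (inv : IsInverse C) (adm : Admissible T C) {n : ℕ}
    {P : Pack C X} (G : Good T inv X n P) (z : C.Obj) (hz : inv.rank z = n)
    (hX : ∀ z : C.Obj, T.Fib (X.obj z)) : T.Fib (NEWt inv adm G z hz) :=
  T.fib_sigma (hX z) fun a => T.fib_sigma (fib_Bz inv adm G z hz)
    fun b => T.fib_id (fib_Bz inv adm G z hz) _ b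

noncomputable def stepA (inv : IsInverse C) (adm : Admissible T C) {n : ℕ}
    {P : Pack C X} (G : Good T inv X n P) (z : C.Obj) : Type u :=
  if _h : inv.rank z < n then P.A z
  else if h2 : inv.rank z = n then NEWt inv adm G z h2
  else X.obj z

theorem stepA_lo (inv : IsInverse C) (adm : Admissible T C) {n : ℕ}
    {P : Pack C X} (G : Good T inv X n P) {z : C.Obj} (h : inv.rank z < n) :
    stepA inv adm G z = P.A z := dif_pos h

theorem stepA_new (inv : IsInverse C) (adm : Admissible T C) {n : ℕ}
    {P : Pack C X} (G : Good T inv X n P) {z : C.Obj} (h : inv.rank z = n) :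
    stepA inv adm G z = NEWt inv adm G z h := by
  rw [stepA, dif_neg (by omega), dif_pos h]

theorem stepA_hi (inv : IsInverse C) (adm : Admissible T C) {n : ℕ}
    {P : Pack C X} (G : Good T inv X n P) {z : C.Obj} (h : n < inv.rank z) :
    stepA inv adm G z = X.obj z := by
  rw [stepA, dif_neg (by omega), dif_neg (by omega)]

noncomputable def stepEta (inv : IsInverse C) (adm : Admissible T C) {n : ℕ}
    {P : Pack C X} (G : Good T inv X n P) (z : C.Obj) (a : X.obj z) :
    stepA inv adm G z :=
  if h : inv.rank z < n then cast (stepA_lo inv adm G h).symm (P.eta z a)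
  else if h2 : inv.rank z = n then
    cast (stepA_new inv adm G h2).symm
      (⟨a, eB inv adm G z h2 (famC inv G z h2 a), T.idrefl _⟩ :
        NEWt inv adm G z h2)
  else cast (stepA_hi inv adm G (by omega)).symm a

noncomputable def stepProj (inv : IsInverse C) (adm : Admissible T C) {n : ℕ}
    {P : Pack C X} (G : Good T inv X n P) (z : C.Obj) (e : stepA inv adm G z)
    (o : RCObj C z) : stepA inv adm G o.y :=
  if h : inv.rank z < n then
    cast (stepA_lo inv adm G (lt_trans (rank_lt_rc inv o) h)).symm
      (P.proj z (cast (stepA_lo inv adm G h) e) o)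
  else if h2 : inv.rank z = n then
    cast (stepA_lo inv adm G (h2 ▸ rank_lt_rc inv o)).symm
      (((eB inv adm G z h2).symm
          (cast (stepA_new inv adm G h2) e).2.1).1 o)
  else stepEta inv adm G o.y (X.map o.f (cast (stepA_hi inv adm G (by omega)) e))

/-- One step of the fibrant-replacement construction. -/
noncomputable def step (inv : IsInverse C) (adm : Admissible T C) {n : ℕ}
    {P : Pack C X} (G : Good T inv X n P) : Pack C X :=
  ⟨stepA inv adm G, stepEta inv adm G, stepProj inv adm G⟩

end RFRaux

namespace RFRaux

variable {T : TLTT.{u}} {C : SCat.{u}} {X : SFunctor C}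

theorem cast_symm_cancel {α β : Sort v} (h : α = β) (b : β) :
    cast h (cast h.symm b) = b := by cases h; rfl

theorem cast_symm_cancel' {α β : Sort v} (h : α = β) (a : α) :
    cast h.symm (cast h a) = a := by cases h; rfl

section StepLemmas

variable (inv : IsInverse C) (adm : Admissible T C) {n : ℕ} {P : Pack C X}
  (G : Good T inv X n P)

theorem step_eta_lo {z : C.Obj} (h : inv.rank z < n) (a : X.obj z) :
    HEq ((step inv adm G).eta z a) (P.eta z a) := by
  show HEq (stepEta inv adm G z a) _
  rw [stepEta, dif_pos h]
  exact cast_heq _ _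

theorem step_eta_new {z : C.Obj} (hz : inv.rank z = n) (a : X.obj z) :
    (step inv adm G).eta z a = cast (stepA_new inv adm G hz).symm
      (⟨a, eB inv adm G z hz (famC inv G z hz a), T.idrefl _⟩ :
        NEWt inv adm G z hz) := by
  show stepEta inv adm G z a = _
  rw [stepEta, dif_neg (by omega), dif_pos hz]

theorem step_proj_lo {z : C.Obj} (h : inv.rank z < n)
    {e : (step inv adm G).A z} {e' : P.A z} (he : HEq e e') (o : RCObj C z) :
    HEq ((step inv adm G).proj z e o) (P.proj z e' o) := by
  show HEq (stepProj inv adm G z e o) _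
  erw [stepProj, dif_pos h]
  have hc : cast (stepA_lo inv adm G h) e = e' :=
    eq_of_heq ((cast_heq _ _).trans he)
  rw [hc]
  exact cast_heq _ _

theorem step_map_lo {x : C.Obj} (h : inv.rank x < n) {y : C.Obj}
    (f : C.Hom x y) {e : (step inv adm G).A x} {e' : P.A x} (he : HEq e e') :
    HEq ((step inv adm G).map inv f e) (P.map inv f e') := by
  by_cases hlt : inv.rank y < inv.rank x
  · simp only [Pack.map, dif_pos hlt]
    exact step_proj_lo inv adm G h he _
  · simp only [Pack.map, dif_neg hlt]
    exact (cast_heq _ _).trans (he.trans (cast_heq _ _).symm)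

theorem step_map_new {z : C.Obj} (hz : inv.rank z = n) {y : C.Obj}
    (f : C.Hom z y) (hy : inv.rank y < inv.rank z) (e : (step inv adm G).A z) :
    (step inv adm G).map inv f e =
      cast (stepA_lo inv adm G (hz ▸ hy)).symm
        (((eB inv adm G z hz).symm
            (cast (stepA_new inv adm G hz) e).2.1).1
          ⟨y, f, nonid_of_lt inv hy f⟩) := by
  show Pack.map inv _ f e = _
  simp only [Pack.map, dif_pos hy]
  show stepProj inv adm G z e _ = _
  erw [stepProj, dif_neg (by omega), dif_pos hz]

end StepLemmas

/-- Collapse a Σ-type with a fixed middle component. -/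
def sigmaFixEquiv {I B : Type u} (R : I → B → Type u) (t : B) :
    {v : Σ _i : I, Σ b : B, R _i b // v.2.1 = t} ≃ Σ i : I, R i t where
  toFun v := ⟨v.1.1, cast (congrArg (R v.1.1) v.2) v.1.2.2⟩
  invFun w := ⟨⟨w.1, t, w.2⟩, rfl⟩
  left_inv := by
    rintro ⟨⟨i, b, r⟩, hb⟩
    dsimp at hb
    subst hb
    rfl
  right_inv := by
    rintro ⟨i, r⟩
    rfl

end RFRaux

namespace RFRaux

variable {T : TLTT.{u}} {C : SCat.{u}} {X : SFunctor C}

theorem good_step (inv : IsInverse C) (adm : Admissible T C) {n : ℕ}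
    {P : Pack C X} (G : Good T inv X n P)
    (hX : ∀ z : C.Obj, T.Fib (X.obj z)) :
    Good T inv X (n + 1) (step inv adm G) := by
  constructor
  · -- fib
    intro z hz1
    by_cases hlo : inv.rank z < n
    · show T.Fib (stepA inv adm G z)
      rw [stepA_lo inv adm G hlo]
      exact G.fib z hlo
    · have hzn : inv.rank z = n := by omega
      show T.Fib (stepA inv adm G z)
      rw [stepA_new inv adm G hzn]
      exact fib_NEWt inv adm G z hzn hX
  · -- comp
    intro x y w g f hx a
    by_cases hxlo : inv.rank x < n
    · have hylo : inv.rank y < n := lt_of_le_of_lt (inv.rank_le f) hxlo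
      apply eq_of_heq
      refine HEq.trans
        (step_map_lo inv adm G hxlo (C.comp g f)
          (e' := cast (stepA_lo inv adm G hxlo) a) (cast_heq _ _).symm) ?_
      rw [G.comp g f hxlo]
      exact (step_map_lo inv adm G hylo g
        (step_map_lo inv adm G hxlo f (cast_heq _ _).symm)).symm
    · have hxn : inv.rank x = n := by omega
      by_cases hy : inv.rank y < inv.rank x
      · by_cases hw : inv.rank w < inv.rank y
        · have hwx : inv.rank w < inv.rank x := lt_trans hw hy
          rw [step_map_new inv adm G hxn (C.comp g f) hwx a,
            step_map_new inv adm G hxn f hy a]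
          set L := (eB inv adm G x hxn).symm
            (cast (stepA_new inv adm G hxn) a).2.1 with hL
          have hyn : inv.rank y < n := hxn ▸ hy
          have hstep := step_map_lo inv adm G hyn g
            (e := cast (stepA_lo inv adm G (hxn ▸ hy)).symm
              (L.1 ⟨y, f, nonid_of_lt inv hy f⟩))
            (e' := L.1 ⟨y, f, nonid_of_lt inv hy f⟩) (cast_heq _ _)
          have hcomp := L.2 ⟨y, f, nonid_of_lt inv hy f⟩
            ⟨w, C.comp g f, nonid_of_lt inv hwx _⟩ ⟨g, rfl⟩
          exact eq_of_heq (((cast_heq _ _).trans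
            (heq_of_eq hcomp.symm)).trans hstep.symm)
        · have e : y = w := obj_eq_of_not_lt inv g hw
          subst e
          have hg : g = C.id y := eq_of_heq
            (inv.createsId g (le_antisymm (le_of_not_gt hw)
              (inv.rank_le g))).choose_spec
          subst hg
          rw [C.id_comp, Pack.map_id]
      · have e : x = y := obj_eq_of_not_lt inv f hy
        subst e
        have hf : f = C.id x := eq_of_heq
          (inv.createsId f (le_antisymm (le_of_not_gt hy)
            (inv.rank_le f))).choose_spec
        subst hf
        rw [C.comp_id, Pack.map_id]
  · -- nat
    intro x y f hx a
    by_cases hxlo : inv.rank x < n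
    · have hylo : inv.rank y < n := lt_of_le_of_lt (inv.rank_le f) hxlo
      apply eq_of_heq
      refine HEq.trans
        (step_map_lo inv adm G hxlo f (step_eta_lo inv adm G hxlo a)) ?_
      rw [G.nat f hxlo]
      exact (step_eta_lo inv adm G hylo (X.map f a)).symm
    · have hxn : inv.rank x = n := by omega
      by_cases hy : inv.rank y < inv.rank x
      · have hyn : inv.rank y < n := hxn ▸ hy
        erw [step_eta_new inv adm G hxn a,
          step_map_new inv adm G hxn f hy _, cast_symm_cancel,
          Equiv.symm_apply_apply]
        show cast _ ((famC inv G x hxn a).1 ⟨y, f, _⟩) =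
          stepEta inv adm G y (X.map f a)
        rw [stepEta, dif_pos hyn]
        rfl
      · have e : x = y := obj_eq_of_not_lt inv f hy
        subst e
        have hf : f = C.id x := eq_of_heq
          (inv.createsId f (le_antisymm (le_of_not_gt hy)
            (inv.rank_le f))).choose_spec
        subst hf
        rw [Pack.map_id, X.map_id]
  · -- reedy
    intro z hz1
    by_cases hlo : inv.rank z < n
    · obtain ⟨F, hF, hE⟩ := G.reedy z hlo
      let toP : MatchP inv (step inv adm G) z → MatchP inv P z := fun c =>
        ⟨fun o => cast (stepA_lo inv adm G (lt_trans (rank_lt_rc inv o) hlo))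
            (c.1 o), by
          intro o o' k hk
          exact eq_of_heq (((step_map_lo inv adm G
              (lt_trans (rank_lt_rc inv o) hlo) k
              (e' := cast (stepA_lo inv adm G (lt_trans (rank_lt_rc inv o) hlo)) (c.1 o))
              (cast_heq _ _).symm).symm.trans
            (heq_of_eq (c.2 o o' k hk))).trans (cast_heq _ _).symm)⟩
      refine ⟨fun c => F (toP c), fun c => hF _, fun c => ?_⟩
      obtain ⟨e⟩ := hE (toP c)
      refine ⟨e.trans (Equiv.subtypeEquiv
        (Equiv.cast (stepA_lo inv adm G hlo).symm) fun a => ?_)⟩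
      refine forall_congr' fun o => ?_
      have hmap : HEq ((step inv adm G).map inv o.f
          (cast (stepA_lo inv adm G hlo).symm a)) (P.map inv o.f a) :=
        step_map_lo inv adm G hlo o.f (cast_heq _ _)
      exact heq_eq_iff hmap.symm (cast_heq _ _)
    · have hzn : inv.rank z = n := by omega
      let limOf : MatchP inv (step inv adm G) z →
          SLimit (resDiag inv G z hzn.le) := fun c =>
        ⟨fun o => cast (stepA_lo inv adm G (hzn ▸ rank_lt_rc inv o)) (c.1 o), by
          intro o o' k
          exact eq_of_heq (((step_map_lo inv adm G
              (hzn ▸ rank_lt_rc inv o) k.1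
              (e' := cast (stepA_lo inv adm G (hzn ▸ rank_lt_rc inv o)) (c.1 o))
              (cast_heq _ _).symm).symm.trans
            (heq_of_eq (c.2 o o' k.1 k.2))).trans (cast_heq _ _).symm)⟩
      refine ⟨fun c => Σ a : X.obj z,
          T.Id (eB inv adm G z hzn (famC inv G z hzn a))
            (eB inv adm G z hzn (limOf c)),
        fun c => T.fib_sigma (hX z) fun a =>
          T.fib_id (fib_Bz inv adm G z hzn) _ _,
        fun c => ?_⟩
      have iff1 : ∀ e : (step inv adm G).A z,
          (∀ o, (step inv adm G).map inv o.f e = c.1 o) ↔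
          (∀ o : RCObj C z, ((eB inv adm G z hzn).symm
              (cast (stepA_new inv adm G hzn) e).2.1).1 o = (limOf c).1 o) := by
        intro e
        refine forall_congr' fun o => ?_
        rw [step_map_new inv adm G hzn o.f (rank_lt_rc inv o) e]
        exact heq_eq_iff (cast_heq _ _) (cast_heq _ _).symm
      have iff2 : ∀ v : NEWt inv adm G z hzn,
          (∀ o : RCObj C z, ((eB inv adm G z hzn).symm v.2.1).1 o
            = (limOf c).1 o) ↔ v.2.1 = eB inv adm G z hzn (limOf c) := by
        intro v
        constructor
        · intro h
          have hv : (eB inv adm G z hzn).symm v.2.1 = limOf c :=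
            Subtype.ext (funext h)
          rw [← hv, Equiv.apply_symm_apply]
        · intro h o
          rw [h, Equiv.symm_apply_apply]
      exact ⟨((Equiv.subtypeEquiv (Equiv.cast (stepA_new inv adm G hzn))
          (fun e => (iff1 e).trans (iff2 _))).trans
        (sigmaFixEquiv _ _)).symm⟩

end RFRaux

namespace RFRaux

variable {T : TLTT.{u}} {C : SCat.{u}} {X : SFunctor C}

def basePack (X : SFunctor C) : Pack C X :=
  ⟨X.obj, fun _ a => a, fun _ a o => X.map o.f a⟩

theorem good_zero (inv : IsInverse C) :
    Good T inv X 0 (basePack X) := by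
  constructor <;> intros <;> omega

noncomputable def tower (inv : IsInverse C) (adm : Admissible T C)
    (hX : ∀ z : C.Obj, T.Fib (X.obj z)) :
    ∀ _n : ℕ, (P : Pack C X) ×' Good T inv X _n P
  | 0 => ⟨basePack X, good_zero inv⟩
  | n + 1 => ⟨step inv adm (tower inv adm hX n).2,
      good_step inv adm (tower inv adm hX n).2 hX⟩

section Stable

variable (inv : IsInverse C) (adm : Admissible T C)
  (hX : ∀ z : C.Obj, T.Fib (X.obj z))

/-- The stage pack used to define the replacement at `z`. -/
noncomputable def PK (z : C.Obj) : Pack C X :=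
  (tower inv adm hX (inv.rank z + 1)).1

noncomputable def GK (z : C.Obj) :
    Good T inv X (inv.rank z + 1) (PK inv adm hX z) :=
  (tower inv adm hX (inv.rank z + 1)).2

theorem stable (m : ℕ) (z : C.Obj) (hm : inv.rank z < m) :
    ((tower inv adm hX m).1.A z = (PK inv adm hX z).A z) ∧
    (∀ a : X.obj z, HEq ((tower inv adm hX m).1.eta z a)
      ((PK inv adm hX z).eta z a)) ∧
    (∀ (e : (tower inv adm hX m).1.A z) (e' : (PK inv adm hX z).A z),
      HEq e e' → ∀ o : RCObj C z,
      HEq ((tower inv adm hX m).1.proj z e o)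
        ((PK inv adm hX z).proj z e' o)) := by
  induction m with
  | zero => omega
  | succ m ih =>
    rcases Nat.lt_or_ge (inv.rank z) m with hlt | hge
    · have IH := ih hlt
      have hA : (tower inv adm hX (m+1)).1.A z = (tower inv adm hX m).1.A z :=
        stepA_lo inv adm (tower inv adm hX m).2 hlt
      refine ⟨hA.trans IH.1, fun a => ?_, fun e e' he o => ?_⟩
      · exact (step_eta_lo inv adm (tower inv adm hX m).2 hlt a).trans
          (IH.2.1 a)
      · have h1 : HEq e (cast hA e) := (cast_heq hA e).symm
        exact (step_proj_lo inv adm (tower inv adm hX m).2 hlt h1 o).trans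
          (IH.2.2 (cast hA e) e' ((cast_heq hA e).trans he) o)
    · obtain rfl : m = inv.rank z := le_antisymm hge (by omega)
      exact ⟨rfl, fun a => HEq.rfl, fun e e' he o => by
        rw [eq_of_heq he]; exact HEq.rfl⟩

theorem stable_map {m : ℕ} {x : C.Obj} (hm : inv.rank x < m) {y : C.Obj}
    (f : C.Hom x y) {e : (tower inv adm hX m).1.A x}
    {e' : (PK inv adm hX x).A x} (he : HEq e e') :
    HEq ((tower inv adm hX m).1.map inv f e)
      ((PK inv adm hX x).map inv f e') := by
  by_cases hlt : inv.rank y < inv.rank x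
  · simp only [Pack.map, dif_pos hlt]
    exact (stable inv adm hX m x hm).2.2 e e' he _
  · simp only [Pack.map, dif_neg hlt]
    exact (cast_heq _ _).trans (he.trans (cast_heq _ _).symm)

end Stable

end RFRaux

namespace RFRaux

variable {T : TLTT.{u}} {C : SCat.{u}} {X : SFunctor C}

def id_cast_both {T : TLTT.{u}} {A B : Type u} (h : A = B) {x y : A}
    (p : T.Id x y) : T.Id (cast h x) (cast h y) := by cases h; exact p

section Final

variable (inv : IsInverse C) (adm : Admissible T C)
  (hX : ∀ z : C.Obj, T.Fib (X.obj z))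

/-- The Reedy fibrant replacement diagram. -/
noncomputable def Yfun : SFunctor C where
  obj z := (PK inv adm hX z).A z
  map {x y} f a :=
    cast ((stable inv adm hX (inv.rank x + 1) y
      (Nat.lt_succ_of_le (inv.rank_le f))).1)
      ((PK inv adm hX x).map inv f a)
  map_id x a := by
    simp only [Pack.map_id]
    exact cast_eq _ a
  map_comp {x y w} g f a := by
    apply eq_of_heq
    refine (cast_heq _ _).trans ?_
    rw [(GK inv adm hX x).comp g f (Nat.lt_succ_self _) a]
    refine HEq.trans ?_ (cast_heq _ _).symm
    exact stable_map inv adm hX (Nat.lt_succ_of_le (inv.rank_le f)) g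
      (cast_heq _ _).symm

/-- The unit of the replacement. -/
noncomputable def etaN : SNat X (Yfun inv adm hX) where
  app z := (PK inv adm hX z).eta z
  naturality {x y} f a := by
    apply eq_of_heq
    refine (cast_heq _ _).trans ?_
    rw [(GK inv adm hX x).nat f (Nat.lt_succ_self _) a]
    exact (stable inv adm hX (inv.rank x + 1) y
      (Nat.lt_succ_of_le (inv.rank_le f))).2.1 (X.map f a)

theorem fibY : ∀ z : C.Obj, T.Fib ((Yfun inv adm hX).obj z) :=
  fun z => (GK inv adm hX z).fib z (Nat.lt_succ_self _)

theorem reedyY : ReedyFibrant T (Yfun inv adm hX) := by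
  intro z
  obtain ⟨F, hF, hE⟩ := (GK inv adm hX z).reedy z (Nat.lt_succ_self _)
  let toM : Matching (Yfun inv adm hX) z → MatchP inv (PK inv adm hX z) z :=
    fun c =>
    ⟨fun o => cast (stable inv adm hX (inv.rank z + 1) o.y
        (lt_trans (rank_lt_rc inv o) (Nat.lt_succ_self _))).1.symm (c.1 o), by
      intro o o' k hk
      have hc := c.2 o o' k hk
      refine eq_of_heq ?_
      refine HEq.trans (stable_map inv adm hX
        (lt_trans (rank_lt_rc inv o) (Nat.lt_succ_self _)) k
        (cast_heq _ _)) ?_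
      exact (cast_heq _ _).symm.trans
        ((heq_of_eq hc).trans (cast_heq _ _).symm)⟩
  refine ⟨fun c => F (toM c), fun c => hF _, fun c => ?_⟩
  obtain ⟨e⟩ := hE (toM c)
  have dir1 : ∀ a : (PK inv adm hX z).A z,
      (∀ o : RCObj C z, Pack.map inv (PK inv adm hX z) o.f a = (toM c).1 o) →
      matchMap (Yfun inv adm hX) z a = c := by
    intro a h
    apply Subtype.ext
    funext o
    refine eq_of_heq ?_
    refine (cast_heq _ _).trans ?_
    rw [h o]
    exact cast_heq _ _
  have dir2 : ∀ a : (PK inv adm hX z).A z,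
      matchMap (Yfun inv adm hX) z a = c →
      (∀ o : RCObj C z, Pack.map inv (PK inv adm hX z) o.f a = (toM c).1 o) := by
    intro a h o
    have hc := congrFun (congrArg Subtype.val h) o
    refine eq_of_heq ?_
    refine HEq.trans (b := (Yfun inv adm hX).map o.f a) ?_ ?_
    · exact (cast_heq _ _).symm
    · exact (heq_of_eq hc).trans (cast_heq _ _).symm
  exact ⟨e.trans ⟨fun a => ⟨a.1, dir1 a.1 a.2⟩, fun b => ⟨b.1, dir2 b.1 b.2⟩,
    fun a => Subtype.ext rfl, fun b => Subtype.ext rfl⟩⟩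

theorem etaN_equiv (z : C.Obj) :
    Nonempty (IsEquivT T ((etaN inv adm hX).app z)) := by
  have G0 := (tower inv adm hX (inv.rank z)).2
  have key : ∀ v : NEWt inv adm G0 z rfl,
      T.Id (⟨v.1, eB inv adm G0 z rfl (famC inv G0 z rfl v.1), T.idrefl _⟩ :
        NEWt inv adm G0 z rfl) v := by
    intro v
    obtain ⟨a, b, p⟩ := v
    exact T.J (eB inv adm G0 z rfl (famC inv G0 z rfl a))
      (fun b p => T.Id
        (⟨a, eB inv adm G0 z rfl (famC inv G0 z rfl a), T.idrefl _⟩ :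
          NEWt inv adm G0 z rfl) ⟨a, b, p⟩)
      (fun b p => T.fib_id (fib_NEWt inv adm G0 z rfl hX) _ _)
      (T.idrefl _) b p
  refine ⟨⟨⟨fun e => (cast (stepA_new inv adm G0 rfl) e).1, fun e => ?_⟩,
    ⟨fun e => (cast (stepA_new inv adm G0 rfl) e).1, fun a => ?_⟩⟩⟩
  · have h1 := id_cast_both (stepA_new inv adm G0 (z := z) rfl).symm
      (key (cast (stepA_new inv adm G0 rfl) e))
    erw [cast_symm_cancel'] at h1
    show T.Id ((step inv adm G0).eta z
      ((cast (stepA_new inv adm G0 rfl) e).1)) e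
    rw [step_eta_new inv adm G0 rfl]
    exact h1
  · show T.Id ((cast (stepA_new inv adm G0 rfl)
      ((step inv adm G0).eta z a)).1) a
    erw [step_eta_new inv adm G0 rfl a, cast_symm_cancel]
    exact T.idrefl a

end Final

end RFRaux


/-- Every diagram over an admissible inverse category admits a Reedy fibrant
replacement: a Reedy fibrant diagram `Y` with a levelwise equivalence `η : X → Y`. -/
theorem reedy_fibrant_replacement (T : TLTT.{u}) (C : SCat.{u})
    (inv : IsInverse C) (adm : Admissible T C)
    (X : SFunctor C) (hX : ∀ z : C.Obj, T.Fib (X.obj z)) :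
    Nonempty ((Y : SFunctor C) ×' (η : SNat X Y) ×'
      (∀ z : C.Obj, T.Fib (Y.obj z)) ∧ ReedyFibrant T Y ∧
      ∀ z : C.Obj, Nonempty (IsEquivT T (η.app z))) :=
  ⟨⟨RFRaux.Yfun inv adm hX, RFRaux.etaN inv adm hX,
    RFRaux.fibY inv adm hX, RFRaux.reedyY inv adm hX,
    fun z => RFRaux.etaN_equiv inv adm hX z⟩⟩
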